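/- Let n ≥ 2. For 0 < a < 1 define f_a : 𝔹 → ℝⁿ on the unit ball 𝔹 ⊂ ℝⁿ by f_a(x) = a x + e₁ with e₁ = (1,0,…,0), and set u_a(x) = (f_a)₁(x) = 1 + a x₁ > 0. Define X(a) = ‖f_a‖₁ − |f_a(0)| and Y(a) = ∫_𝕊 ( u_a(ζ) log u_a(ζ) − u_a(0) log u_a(0) ) dσ(ζ). Then as a → 0, X(a) = a²(n−1)/(2n) + o(a²) and Y(a) = a²/(2n) + o(a²); in particular lim_{a→0} X(a)/Y(a) = n − 1. -/

import Mathlib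

open Metric MeasureTheory Filter Topology Asymptotics
open Set
open scoped Pointwise

/-- The normalized surface measure `σ` on the unit sphere `𝕊 ⊂ ℝⁿ`. -/
noncomputable def sphereσ (n : ℕ) : Measure (sphere (0 : EuclideanSpace ℝ (Fin n)) 1) :=
  (((volume : Measure (EuclideanSpace ℝ (Fin n))).toSphere) Set.univ)⁻¹ •
    (volume : Measure (EuclideanSpace ℝ (Fin n))).toSphere

/-- `X(a) = ‖f_a‖₁ − |f_a(0)|` for `f_a(x) = a x + e₁` on the unit ball of `ℝⁿ`. -/
noncomputable def Xfun (n : ℕ) (hn : 0 < n) (a : ℝ) : ℝ :=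
  (⨆ r : Set.Ioo (0:ℝ) 1,
      ∫ ζ : sphere (0 : EuclideanSpace ℝ (Fin n)) 1,
        ‖a • (r.1 • (ζ : EuclideanSpace ℝ (Fin n))) +
          EuclideanSpace.single (⟨0, hn⟩ : Fin n) (1:ℝ)‖ ∂(sphereσ n)) -
    ‖a • (0 : EuclideanSpace ℝ (Fin n)) +
      EuclideanSpace.single (⟨0, hn⟩ : Fin n) (1:ℝ)‖

/-- `Y(a) = ∫_𝕊 (u_a(ζ) log u_a(ζ) − u_a(0) log u_a(0)) dσ(ζ)` for `u_a(x) = 1 + a x₁`. -/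
noncomputable def Yfun (n : ℕ) (hn : 0 < n) (a : ℝ) : ℝ :=
  ∫ ζ : sphere (0 : EuclideanSpace ℝ (Fin n)) 1,
    ((1 + a * (ζ : EuclideanSpace ℝ (Fin n)) ⟨0, hn⟩) *
        Real.log (1 + a * (ζ : EuclideanSpace ℝ (Fin n)) ⟨0, hn⟩) -
      1 * Real.log 1) ∂(sphereσ n)

abbrev En (n : ℕ) := EuclideanSpace ℝ (Fin n)
abbrev Sn (n : ℕ) := sphere (0 : En n) 1

lemma toSphere_univ_pos (n : ℕ) (hn : 0 < n) :
    (volume : Measure (En n)).toSphere Set.univ ≠ 0 ∧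
      (volume : Measure (En n)).toSphere Set.univ ≠ ⊤ := by
  haveI : Nontrivial (En n) := by
    refine ⟨0, EuclideanSpace.single (⟨0, hn⟩ : Fin n) (1:ℝ), ?_⟩
    intro h
    have := congrArg norm h
    simp [EuclideanSpace.norm_single] at this
  rw [Measure.toSphere_apply_univ]
  constructor
  · simp only [ne_eq, mul_eq_zero, not_or]
    constructor
    · simp [finrank_euclideanSpace_fin, hn.ne']
    · exact (measure_ball_pos volume 0 one_pos).ne'
  · exact (ENNReal.mul_lt_top (ENNReal.natCast_lt_top _) measure_ball_lt_top).ne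

lemma isProb_sphereσ (n : ℕ) (hn : 0 < n) : IsProbabilityMeasure (sphereσ n) := by
  obtain ⟨h0, ht⟩ := toSphere_univ_pos n hn
  constructor
  rw [sphereσ, Measure.smul_apply, smul_eq_mul, ENNReal.inv_mul_cancel h0 ht]

/-- The map on the unit sphere induced by a linear isometry equivalence. -/
noncomputable def sphMap {n : ℕ} (e : En n ≃ₗᵢ[ℝ] En n) (ζ : Sn n) : Sn n :=
  ⟨e ζ, by
    have hζ : ‖(ζ : En n)‖ = 1 := mem_sphere_zero_iff_norm.mp ζ.2
    simpa [mem_sphere_zero_iff_norm, e.norm_map] using hζ⟩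

lemma continuous_sphMap {n : ℕ} (e : En n ≃ₗᵢ[ℝ] En n) : Continuous (sphMap e) :=
  Continuous.subtype_mk (e.continuous.comp continuous_subtype_val) _

lemma map_toSphere {n : ℕ} (e : En n ≃ₗᵢ[ℝ] En n) :
    Measure.map (sphMap e) (volume : Measure (En n)).toSphere
      = (volume : Measure (En n)).toSphere := by
  ext s hs
  rw [Measure.map_apply (continuous_sphMap e).measurable hs,
    Measure.toSphere_apply' _ (hs.preimage (continuous_sphMap e).measurable),
    Measure.toSphere_apply' _ hs]
  congr 1
  have h1 : (Subtype.val '' (sphMap e ⁻¹' s) : Set (En n)) = ⇑e.symm '' (Subtype.val '' s) := by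
    ext x
    constructor
    · rintro ⟨ζ, hζ, rfl⟩
      exact ⟨(sphMap e ζ : En n), ⟨sphMap e ζ, hζ, rfl⟩, by simp [sphMap]⟩
    · rintro ⟨y, ⟨w, hw, rfl⟩, rfl⟩
      have hmem : e.symm (w : En n) ∈ Sn n := by
        have : ‖(w : En n)‖ = 1 := mem_sphere_zero_iff_norm.mp w.2
        simpa [mem_sphere_zero_iff_norm, e.symm.norm_map] using this
      refine ⟨⟨e.symm w, hmem⟩, ?_, rfl⟩
      show sphMap e ⟨e.symm (w : En n), hmem⟩ ∈ s
      have : sphMap e ⟨e.symm (w : En n), hmem⟩ = w := by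
        apply Subtype.ext
        simp [sphMap]
      rw [this]; exact hw
  rw [h1]
  have h2 : (Ioo (0:ℝ) 1 • (⇑e.symm '' (Subtype.val '' s)) : Set (En n))
      = ⇑e.symm '' (Ioo (0:ℝ) 1 • (Subtype.val '' s)) := by
    ext y
    simp only [Set.mem_smul, Set.mem_image]
    constructor
    · rintro ⟨c, hc, z, ⟨x, hx, rfl⟩, rfl⟩
      exact ⟨c • x, ⟨c, hc, x, hx, rfl⟩, e.symm.map_smul c x⟩
    · rintro ⟨z, ⟨c, hc, x, hx, rfl⟩, rfl⟩
      exact ⟨c, hc, e.symm x, ⟨x, hx, rfl⟩, (e.symm.map_smul c x).symm⟩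
  rw [h2]
  have h3 : ⇑e.symm '' (Ioo (0:ℝ) 1 • (Subtype.val '' s))
      = ⇑e ⁻¹' (Ioo (0:ℝ) 1 • (Subtype.val '' s)) := by
    ext x
    simp only [Set.mem_image, Set.mem_preimage]
    constructor
    · rintro ⟨y, hy, rfl⟩; simpa using hy
    · intro hx; exact ⟨e x, hx, by simp⟩
  rw [h3]
  have h4 : (⇑e ⁻¹' (Ioo (0:ℝ) 1 • (Subtype.val '' s)))
      = ⇑(e.toHomeomorph.toMeasurableEquiv) ⁻¹' (Ioo (0:ℝ) 1 • (Subtype.val '' s)) := rfl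
  rw [h4, ← MeasurableEquiv.map_apply]
  have h5 : Measure.map (⇑(e.toHomeomorph.toMeasurableEquiv)) (volume : Measure (En n)) = volume :=
    e.measurePreserving.map_eq
  rw [h5]

lemma map_sphereσ {n : ℕ} (e : En n ≃ₗᵢ[ℝ] En n) :
    Measure.map (sphMap e) (sphereσ n) = sphereσ n := by
  rw [sphereσ, Measure.map_smul, map_toSphere]

lemma integral_sphMap {n : ℕ} (e : En n ≃ₗᵢ[ℝ] En n) (f : Sn n → ℝ) (hf : Continuous f) :
    ∫ ζ, f (sphMap e ζ) ∂(sphereσ n) = ∫ ζ, f ζ ∂(sphereσ n) := by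
  conv_rhs => rw [← map_sphereσ e]
  rw [integral_map (continuous_sphMap e).aemeasurable hf.aestronglyMeasurable]

lemma integrable_cont {n : ℕ} (hn : 0 < n) {f : Sn n → ℝ} (hf : Continuous f) :
    Integrable f (sphereσ n) := by
  haveI := isProb_sphereσ n hn
  exact hf.integrable_of_hasCompactSupport
    (isCompact_univ.of_isClosed_subset (isClosed_tsupport f) (Set.subset_univ _))

lemma continuous_coord {n : ℕ} (i : Fin n) :
    Continuous (fun ζ : Sn n => (ζ : En n) i) :=
  (EuclideanSpace.proj i).continuous.comp continuous_subtype_val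

lemma int_coord {n : ℕ} (hn : 0 < n) (i : Fin n) :
    ∫ ζ : Sn n, (ζ : En n) i ∂(sphereσ n) = 0 := by
  have key := integral_sphMap (n := n) (LinearIsometryEquiv.neg ℝ)
    (fun ζ : Sn n => (ζ : En n) i) (continuous_coord i)
  have h1 : ∀ ζ : Sn n, ((sphMap (LinearIsometryEquiv.neg ℝ) ζ : Sn n) : En n) i
      = -((ζ : En n) i) := fun ζ => rfl
  simp only [h1] at key
  rw [integral_neg] at key
  linarith

lemma sphere_sum_sq {n : ℕ} (ζ : Sn n) : ∑ i, ((ζ : En n) i)^2 = 1 := by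
  have hζ : ‖(ζ : En n)‖ = 1 := mem_sphere_zero_iff_norm.mp ζ.2
  have := real_inner_self_eq_norm_sq (x := (ζ : En n))
  rw [hζ] at this
  have h2 : inner (𝕜 := ℝ) ((ζ : En n)) ((ζ : En n)) = ∑ i, ((ζ : En n) i) * ((ζ : En n) i) :=
    PiLp.inner_apply _ _
  rw [h2] at this
  simpa [pow_two] using this

lemma int_coord_sq {n : ℕ} (hn : 0 < n) (i : Fin n) :
    ∫ ζ : Sn n, ((ζ : En n) i)^2 ∂(sphereσ n) = 1 / n := by
  haveI := isProb_sphereσ n hn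
  have hsame : ∀ j : Fin n, ∫ ζ : Sn n, ((ζ : En n) j)^2 ∂(sphereσ n)
      = ∫ ζ : Sn n, ((ζ : En n) i)^2 ∂(sphereσ n) := by
    intro j
    have key := integral_sphMap (n := n)
      (LinearIsometryEquiv.piLpCongrLeft 2 ℝ ℝ (Equiv.swap i j))
      (fun ζ : Sn n => ((ζ : En n) i)^2) ((continuous_coord i).pow 2)
    have h1 : ∀ ζ : Sn n,
        ((sphMap (LinearIsometryEquiv.piLpCongrLeft 2 ℝ ℝ (Equiv.swap i j)) ζ : Sn n) : En n) i
        = (ζ : En n) j := by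
      intro ζ
      show (LinearIsometryEquiv.piLpCongrLeft 2 ℝ ℝ (Equiv.swap i j)) (ζ : En n) i = _
      rw [LinearIsometryEquiv.piLpCongrLeft_apply]
      show (ζ : En n) ((Equiv.swap i j).symm i) = _
      rw [Equiv.symm_swap, Equiv.swap_apply_left]
    simp only [h1] at key
    exact key
  have hsum : ∑ j : Fin n, ∫ ζ : Sn n, ((ζ : En n) j)^2 ∂(sphereσ n) = 1 := by
    rw [← integral_finset_sum]
    · simp only [sphere_sum_sq]
      simp
    · intro j _
      exact integrable_cont hn ((continuous_coord j).pow 2)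
  rw [Finset.sum_congr rfl (fun j _ => hsame j)] at hsum
  simp only [Finset.sum_const, Finset.card_univ, Fintype.card_fin, nsmul_eq_mul] at hsum
  field_simp at hsum ⊢
  linarith

def idx0 (n : ℕ) (hn : 0 < n) : Fin n := ⟨0, hn⟩

noncomputable def E1v (n : ℕ) (hn : 0 < n) : En n :=
  EuclideanSpace.single (idx0 n hn) (1:ℝ)

noncomputable def gfun (n : ℕ) (hn : 0 < n) (t : ℝ) : ℝ :=
  ∫ ζ : Sn n, ‖t • (ζ : En n) + E1v n hn‖ ∂(sphereσ n)

section gsec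
variable {n : ℕ} (hn : 0 < n)

lemma cont_gint (t : ℝ) : Continuous (fun ζ : Sn n => ‖t • (ζ : En n) + (E1v n hn)‖) :=
  ((continuous_subtype_val.const_smul t).add continuous_const).norm

lemma inner_E1 (x : En n) : inner (𝕜 := ℝ) x (E1v n hn) = x (idx0 n hn) := by
  rw [E1v, EuclideanSpace.inner_single_right]
  simp

lemma norm_E1 : ‖E1v n hn‖ = 1 := by simp [E1v]

lemma norm_sq_aux (t : ℝ) (ζ : Sn n) :
    ‖t • (ζ : En n) + (E1v n hn)‖ ^ 2 = 1 + 2 * t * (ζ : En n) (idx0 n hn) + t ^ 2 := by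
  have hζ : ‖(ζ : En n)‖ = 1 := mem_sphere_zero_iff_norm.mp ζ.2
  rw [norm_add_sq_real, norm_smul, real_inner_smul_left, inner_E1 hn, norm_E1 hn]
  rw [hζ, Real.norm_eq_abs]
  rw [mul_pow, sq_abs]
  ring

lemma one_add_le_norm (t : ℝ) (ζ : Sn n) :
    1 + t * (ζ : En n) (idx0 n hn) ≤ ‖t • (ζ : En n) + (E1v n hn)‖ := by
  have h := real_inner_le_norm (t • (ζ : En n) + (E1v n hn)) (E1v n hn)
  rw [norm_E1 hn, mul_one] at h
  rw [inner_add_left, real_inner_smul_left, inner_E1 hn, inner_E1 hn] at h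
  have he : (E1v n hn) (idx0 n hn) = 1 := by
    simp [E1v, EuclideanSpace.single_apply]
  rw [he] at h
  linarith

lemma integral_one_add (t : ℝ) :
    ∫ ζ : Sn n, (1 + t * (ζ : En n) (idx0 n hn)) ∂(sphereσ n) = 1 := by
  haveI := isProb_sphereσ n hn
  rw [integral_add (integrable_const _)
    ((integrable_cont hn (continuous_coord (idx0 n hn))).const_mul t),
    integral_const_mul, int_coord hn, integral_const]
  simp

lemma gfun_ge_one (t : ℝ) : 1 ≤ gfun n hn t := by
  haveI := isProb_sphereσ n hn
  rw [← integral_one_add hn t]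
  exact integral_mono
    ((integrable_const _).add ((integrable_cont hn (continuous_coord (idx0 n hn))).const_mul t))
    (integrable_cont hn (cont_gint hn t)) (fun ζ => one_add_le_norm hn t ζ)

lemma gfun_convex_ineq (a r : ℝ) (hr0 : 0 ≤ r) (hr1 : r ≤ 1) :
    gfun n hn (a * r) ≤ (1 - r) + r * gfun n hn a := by
  haveI := isProb_sphereσ n hn
  have hpt : ∀ ζ : Sn n, ‖(a * r) • (ζ : En n) + (E1v n hn)‖
      ≤ (1 - r) + r * ‖a • (ζ : En n) + (E1v n hn)‖ := by
    intro ζ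
    have hid : (a * r) • (ζ : En n) + (E1v n hn)
        = (1 - r) • ((E1v n hn) : En n) + r • (a • (ζ : En n) + (E1v n hn)) := by
      module
    rw [hid]
    calc ‖(1 - r) • ((E1v n hn) : En n) + r • (a • (ζ : En n) + (E1v n hn))‖
        ≤ ‖(1 - r) • ((E1v n hn) : En n)‖ + ‖r • (a • (ζ : En n) + (E1v n hn))‖ := norm_add_le _ _
      _ = (1 - r) + r * ‖a • (ζ : En n) + (E1v n hn)‖ := by
          rw [norm_smul, norm_smul, norm_E1 hn]
          simp [abs_of_nonneg hr0, abs_of_nonneg (by linarith : (0:ℝ) ≤ 1 - r)]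
  calc gfun n hn (a * r) ≤ ∫ ζ : Sn n, ((1 - r) + r * ‖a • (ζ : En n) + (E1v n hn)‖) ∂(sphereσ n) :=
        integral_mono (integrable_cont hn (cont_gint hn _))
          ((integrable_const _).add ((integrable_cont hn (cont_gint hn a)).const_mul r)) hpt
    _ = (1 - r) + r * gfun n hn a := by
        rw [integral_add (integrable_const _)
          ((integrable_cont hn (cont_gint hn a)).const_mul r),
          integral_const_mul, integral_const]
        simp [gfun]

lemma gfun_lower (a r : ℝ) : gfun n hn a ≤ gfun n hn (a * r) + |a - a * r| := by
  haveI := isProb_sphereσ n hn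
  have hpt : ∀ ζ : Sn n, ‖a • (ζ : En n) + (E1v n hn)‖
      ≤ ‖(a * r) • (ζ : En n) + (E1v n hn)‖ + |a - a * r| := by
    intro ζ
    have hζ : ‖(ζ : En n)‖ = 1 := mem_sphere_zero_iff_norm.mp ζ.2
    have hid : a • (ζ : En n) + (E1v n hn) = ((a * r) • (ζ : En n) + (E1v n hn)) + (a - a * r) • (ζ : En n) := by
      module
    rw [hid]
    calc ‖((a * r) • (ζ : En n) + (E1v n hn)) + (a - a * r) • (ζ : En n)‖
        ≤ ‖(a * r) • (ζ : En n) + (E1v n hn)‖ + ‖(a - a * r) • (ζ : En n)‖ := norm_add_le _ _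
      _ = ‖(a * r) • (ζ : En n) + (E1v n hn)‖ + |a - a * r| := by rw [norm_smul, hζ]; simp
  calc gfun n hn a ≤ ∫ ζ : Sn n, (‖(a * r) • (ζ : En n) + (E1v n hn)‖ + |a - a * r|) ∂(sphereσ n) :=
        integral_mono (integrable_cont hn (cont_gint hn a))
          ((integrable_cont hn (cont_gint hn _)).add (integrable_const _)) hpt
    _ = gfun n hn (a * r) + |a - a * r| := by
        rw [integral_add (integrable_cont hn (cont_gint hn _)) (integrable_const _),
          integral_const]
        simp [gfun]

lemma sup_gfun_eq {a : ℝ} (ha : 0 < a) (ha1 : a < 1) :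
    (⨆ r : Set.Ioo (0:ℝ) 1, gfun n hn (a * r)) = gfun n hn a := by
  have hbdd : BddAbove (Set.range (fun r : Set.Ioo (0:ℝ) 1 => gfun n hn (a * r))) := by
    refine ⟨gfun n hn a, ?_⟩
    rintro x ⟨r, rfl⟩
    have h := gfun_convex_ineq hn a r r.2.1.le r.2.2.le
    have h1 := gfun_ge_one hn a
    have hr1 : (r : ℝ) ≤ 1 := r.2.2.le
    nlinarith
  haveI : Nonempty (Set.Ioo (0:ℝ) 1) := ⟨⟨1/2, by norm_num⟩⟩
  refine le_antisymm (ciSup_le ?_) ?_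
  · rintro ⟨r, hr⟩
    have h := gfun_convex_ineq hn a r hr.1.le hr.2.le
    have h1 := gfun_ge_one hn a
    have hr1 : (r : ℝ) ≤ 1 := hr.2.le
    nlinarith
  · refine le_of_forall_pos_le_add (fun ε hε => ?_)
    set r : ℝ := max (1 - ε / a) (1/2) with hrdef
    have hr0 : (0:ℝ) < r := lt_of_lt_of_le (by norm_num) (le_max_right _ _)
    have hrlt : r < 1 := by
      apply max_lt
      · have : 0 < ε / a := div_pos hε ha
        linarith
      · norm_num
    have hrmem : r ∈ Set.Ioo (0:ℝ) 1 := ⟨hr0, hrlt⟩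
    have hle := le_ciSup hbdd (⟨r, hrmem⟩ : Set.Ioo (0:ℝ) 1)
    have hlow := gfun_lower hn a r
    have habs : |a - a * r| ≤ ε := by
      rw [abs_of_nonneg (by nlinarith : (0:ℝ) ≤ a - a * r)]
      have h1r : 1 - ε / a ≤ r := le_max_left _ _
      have : a * (1 - ε / a) ≤ a * r := by nlinarith
      rw [mul_sub, mul_div_cancel₀ _ ha.ne'] at this
      linarith
    calc gfun n hn a ≤ gfun n hn (a * r) + |a - a * r| := hlow
      _ ≤ (⨆ r : Set.Ioo (0:ℝ) 1, gfun n hn (a * r)) + ε := add_le_add hle habs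

end gsec

lemma abs_sub_le_of_sq {p q B : ℝ} (hqp : 1 ≤ q + p) (hB : 0 < B)
    (hub : p ^ 2 - q ^ 2 ≤ B) (hlb : -B ≤ p ^ 2 - q ^ 2) : |q - p| ≤ B := by
  rw [abs_le]
  constructor
  · rcases le_or_gt (p - q) 0 with h | h
    · linarith
    · have hm : (p - q) * 1 ≤ (p - q) * (q + p) := mul_le_mul_of_nonneg_left hqp h.le
      have hr : (p - q) * (q + p) = p ^ 2 - q ^ 2 := by ring
      linarith
  · rcases le_or_gt (q - p) 0 with h | h
    · linarith
    · have hm : (q - p) * 1 ≤ (q - p) * (q + p) := mul_le_mul_of_nonneg_left hqp h.le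
      have hr : (q - p) * (q + p) = q ^ 2 - p ^ 2 := by ring
      linarith

lemma taylor_sqrt {a c q : ℝ} (ha : 0 < a) (ha2 : a ≤ 1/2) (hc : |c| ≤ 1)
    (hq0 : 0 ≤ q) (hq2 : q ^ 2 = 1 + 2 * a * c + a ^ 2) :
    |q - (1 + a * c + a ^ 2 / 2 * (1 - c ^ 2))| ≤ 2 * a ^ 3 := by
  obtain ⟨hc1, hc2⟩ := abs_le.mp hc
  have hc2' : c ^ 2 ≤ 1 := by nlinarith
  have ha3 : (0:ℝ) < a ^ 3 := by positivity
  have hu0 : (0:ℝ) ≤ 1 - c^2 := by linarith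
  have hu1 : 1 - c^2 ≤ 1 := by nlinarith [sq_nonneg c]
  refine abs_sub_le_of_sq ?_ (by positivity) ?_ ?_
  · have hqhalf : (1:ℝ)/2 ≤ q := by nlinarith
    nlinarith
  · have hdiff : (1 + a * c + a ^ 2 / 2 * (1 - c ^ 2)) ^ 2 - q ^ 2
        = a ^ 3 * c * (1 - c ^ 2) + a ^ 4 * (1 - c ^ 2) ^ 2 / 4 := by
      rw [hq2]; ring
    rw [hdiff]
    have h1 : c * (1 - c^2) ≤ 1 := by nlinarith
    have h2 : (1 - c^2)^2 ≤ 1 := by nlinarith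
    have t1 : a^3 * (c * (1-c^2)) ≤ a^3 * 1 := mul_le_mul_of_nonneg_left h1 ha3.le
    have ha4 : (0:ℝ) ≤ a^4 := by positivity
    have t2 : a^4 * (1-c^2)^2 ≤ a^4 * 1 := mul_le_mul_of_nonneg_left h2 ha4
    have t3 : a^4 ≤ a^3 * (1/2) := by
      have := mul_le_mul_of_nonneg_left ha2 ha3.le
      calc a^4 = a^3 * a := by ring
        _ ≤ a^3 * (1/2) := this
    nlinarith [t1, t2, t3]
  · have hdiff : (1 + a * c + a ^ 2 / 2 * (1 - c ^ 2)) ^ 2 - q ^ 2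
        = a ^ 3 * c * (1 - c ^ 2) + a ^ 4 * (1 - c ^ 2) ^ 2 / 4 := by
      rw [hq2]; ring
    rw [hdiff]
    have h1' : -1 ≤ c * (1 - c^2) := by nlinarith
    have t1' : a^3 * (-1) ≤ a^3 * (c * (1-c^2)) := mul_le_mul_of_nonneg_left h1' ha3.le
    have ha4 : (0:ℝ) ≤ a^4 := by positivity
    have t2' : (0:ℝ) ≤ a^4 * (1-c^2)^2 := mul_nonneg ha4 (sq_nonneg _)
    nlinarith [t1', t2']

lemma taylor_log {s : ℝ} (hs : |s| ≤ 1/2) :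
    |(1 + s) * Real.log (1 + s) - s - s ^ 2 / 2| ≤ 4 * |s| ^ 3 := by
  have h1 : |(-s)| < 1 := by rw [abs_neg]; linarith [abs_nonneg s]
  have key := Real.abs_log_sub_add_sum_range_le h1 2
  have hsum : (∑ i ∈ Finset.range 2, (-s) ^ (i + 1) / (i + 1)) = -s + s^2/2 := by
    rw [Finset.sum_range_succ, Finset.sum_range_succ, Finset.sum_range_zero]
    norm_num
  rw [hsum, abs_neg] at key
  have h2 : (1:ℝ) - -s = 1 + s := by ring
  rw [h2] at key
  have hden : (1:ℝ)/2 ≤ 1 - |s| := by linarith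
  have hs3 : (0:ℝ) ≤ |s|^3 := by positivity
  have hR : |Real.log (1 + s) - s + s ^ 2 / 2| ≤ 2 * |s| ^ 3 := by
    have heq : -s + s^2/2 + Real.log (1 + s) = Real.log (1 + s) - s + s^2/2 := by ring
    rw [heq] at key
    have : |s| ^ 3 / (1 - |s|) ≤ 2 * |s| ^ 3 := by
      rw [div_le_iff₀ (by linarith)]
      nlinarith
    linarith
  set R := Real.log (1 + s) - s + s ^ 2 / 2 with hRdef
  have hlog : Real.log (1 + s) = s - s ^ 2 / 2 + R := by rw [hRdef]; ring
  have hmain : (1 + s) * Real.log (1 + s) - s - s ^ 2 / 2 = -s^3/2 + R * (1 + s) := by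
    rw [hlog]; ring
  rw [hmain]
  calc |(-s^3/2 + R * (1 + s))| ≤ |(-s^3/2)| + |R * (1 + s)| := abs_add_le _ _
    _ = |s|^3/2 + |R| * |1 + s| := by
        rw [abs_mul, abs_div, abs_neg, abs_pow]
        norm_num
    _ ≤ 4 * |s| ^ 3 := by
        have hS : |1 + s| ≤ 3/2 := by
          rw [abs_le]; constructor <;> [linarith [abs_le.mp hs]; linarith [abs_le.mp hs]]
        have hRn : (0:ℝ) ≤ |R| := abs_nonneg _
        nlinarith [abs_nonneg (1 + s)]

lemma olem {F : ℝ → ℝ} {C : ℝ} (hC : 0 < C)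
    (h : ∀ a : ℝ, 0 < a → a ≤ 1/2 → |F a| ≤ C * a ^ 3) :
    F =o[𝓝[>] (0:ℝ)] (fun a => a ^ 2) := by
  rw [Asymptotics.isLittleO_iff]
  intro ε hε
  have hm : (0:ℝ) < min (1/2) (ε / C) := lt_min (by norm_num) (div_pos hε hC)
  filter_upwards [Ioo_mem_nhdsGT_of_mem (Set.mem_Ico.mpr ⟨le_refl 0, hm⟩)] with a ha
  obtain ⟨ha0, halt⟩ := ha
  have ha12 : a ≤ 1/2 := le_trans halt.le (min_le_left _ _)
  have haε : C * a ≤ ε := by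
    have : a ≤ ε / C := le_trans halt.le (min_le_right _ _)
    rw [mul_comm, ← le_div_iff₀ hC]
    exact this
  have := h a ha0 ha12
  rw [Real.norm_eq_abs, Real.norm_eq_abs]
  calc |F a| ≤ C * a ^ 3 := this
    _ = (C * a) * a ^ 2 := by ring
    _ ≤ ε * a ^ 2 := by nlinarith [sq_nonneg a]
    _ = ε * |a ^ 2| := by rw [abs_of_nonneg (sq_nonneg a)]

section est
variable {n : ℕ} (hn : 0 < n)

lemma abs_coord_le_one (ζ : Sn n) (i : Fin n) : |(ζ : En n) i| ≤ 1 := by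
  have hsum := sphere_sum_sq ζ
  have hsq : ((ζ : En n) i) ^ 2 ≤ 1 := by
    rw [← hsum]
    exact Finset.single_le_sum (f := fun j : Fin n => ((ζ : En n) j)^2) (fun j _ => sq_nonneg _) (Finset.mem_univ i)
  rw [abs_le]
  constructor
  · nlinarith [sq_nonneg ((ζ : En n) i + 1)]
  · nlinarith [sq_nonneg ((ζ : En n) i - 1)]

lemma integrable_p (a : ℝ) :
    Integrable (fun ζ : Sn n =>
      1 + a * (ζ : En n) (idx0 n hn) + a^2/2 * (1 - ((ζ : En n) (idx0 n hn))^2)) (sphereσ n) := by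
  apply integrable_cont hn
  exact (continuous_const.add (continuous_const.mul (continuous_coord _))).add
    (continuous_const.mul (continuous_const.sub ((continuous_coord _).pow 2)))

lemma int_p (a : ℝ) :
    ∫ ζ : Sn n, (1 + a * (ζ : En n) (idx0 n hn)
        + a^2/2 * (1 - ((ζ : En n) (idx0 n hn))^2)) ∂(sphereσ n)
      = 1 + a ^ 2 * ((n:ℝ) - 1) / (2 * n) := by
  haveI := isProb_sphereσ n hn
  have i1 : Integrable (fun ζ : Sn n => 1 + a * (ζ : En n) (idx0 n hn)) (sphereσ n) :=
    (integrable_const _).add ((integrable_cont hn (continuous_coord _)).const_mul a)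
  have i2 : Integrable (fun ζ : Sn n =>
      a^2/2 * (1 - ((ζ : En n) (idx0 n hn))^2)) (sphereσ n) :=
    ((integrable_const 1).sub (integrable_cont hn ((continuous_coord _).pow 2))).const_mul _
  rw [integral_add i1 i2, integral_one_add hn a, integral_const_mul,
    integral_sub (integrable_const 1) (integrable_cont hn (f := fun ζ : Sn n => ((ζ : En n) (idx0 n hn))^2) ((continuous_coord _).pow 2)),
    integral_const, int_coord_sq hn]
  have hnne : (n:ℝ) ≠ 0 := Nat.cast_ne_zero.mpr hn.ne'
  simp only [measure_univ, probReal_univ, ENNReal.toReal_one, smul_eq_mul, one_mul, mul_one]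
  field_simp

lemma Xfun_eq {a : ℝ} (ha : 0 < a) (ha1 : a < 1) : Xfun n hn a = gfun n hn a - 1 := by
  unfold Xfun
  have h0 : ‖a • (0 : En n) + EuclideanSpace.single (⟨0, hn⟩ : Fin n) (1:ℝ)‖ = 1 := by
    rw [smul_zero, zero_add]
    simp
  rw [h0]
  congr 1
  have hsup : (⨆ r : Set.Ioo (0:ℝ) 1,
      ∫ ζ : Sn n, ‖a • (r.1 • (ζ : En n)) + EuclideanSpace.single (⟨0, hn⟩ : Fin n) (1:ℝ)‖
        ∂(sphereσ n)) = ⨆ r : Set.Ioo (0:ℝ) 1, gfun n hn (a * r.1) := by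
    apply iSup_congr
    intro r
    simp only [gfun, E1v, idx0, smul_smul]
  rw [hsup, sup_gfun_eq hn ha ha1]

lemma Xbound {a : ℝ} (ha : 0 < a) (ha2 : a ≤ 1/2) :
    |Xfun n hn a - a ^ 2 * ((n:ℝ) - 1) / (2 * n)| ≤ 2 * a ^ 3 := by
  haveI := isProb_sphereσ n hn
  rw [Xfun_eq hn ha (lt_of_le_of_lt ha2 (by norm_num))]
  have hint : gfun n hn a - 1 - a ^ 2 * ((n:ℝ) - 1) / (2 * n)
      = ∫ ζ : Sn n, (‖a • (ζ : En n) + E1v n hn‖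
        - (1 + a * (ζ : En n) (idx0 n hn) + a^2/2 * (1 - ((ζ : En n) (idx0 n hn))^2)))
        ∂(sphereσ n) := by
    rw [integral_sub (integrable_cont hn (cont_gint hn a)) (integrable_p hn a), int_p hn a]
    unfold gfun
    ring
  rw [hint, ← Real.norm_eq_abs]
  have key := norm_integral_le_of_norm_le_const (μ := sphereσ n) (C := 2 * a ^ 3)
    (f := fun ζ : Sn n => ‖a • (ζ : En n) + E1v n hn‖
      - (1 + a * (ζ : En n) (idx0 n hn) + a^2/2 * (1 - ((ζ : En n) (idx0 n hn))^2)))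
    (ae_of_all _ (fun ζ => by
      rw [Real.norm_eq_abs]
      exact taylor_sqrt ha ha2 (abs_coord_le_one ζ _) (norm_nonneg _) (norm_sq_aux hn a ζ)))
  simpa using key

lemma Yfun_eq (a : ℝ) : Yfun n hn a
    = ∫ ζ : Sn n, (1 + a * (ζ : En n) (idx0 n hn))
        * Real.log (1 + a * (ζ : En n) (idx0 n hn)) ∂(sphereσ n) := by
  unfold Yfun idx0
  simp

lemma continuous_phi {a : ℝ} (ha : 0 < a) (ha2 : a ≤ 1/2) :
    Continuous (fun ζ : Sn n => (1 + a * (ζ : En n) (idx0 n hn))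
      * Real.log (1 + a * (ζ : En n) (idx0 n hn))) := by
  have hbase : Continuous (fun ζ : Sn n => 1 + a * (ζ : En n) (idx0 n hn)) :=
    continuous_const.add (continuous_const.mul (continuous_coord _))
  have hne : ∀ ζ : Sn n, 1 + a * (ζ : En n) (idx0 n hn) ≠ 0 := by
    intro ζ
    have h1 := abs_le.mp (abs_coord_le_one ζ (idx0 n hn))
    nlinarith [h1.1, h1.2]
  exact hbase.mul (hbase.log hne)

lemma int_Yp (a : ℝ) :
    ∫ ζ : Sn n, (a * (ζ : En n) (idx0 n hn)
        + a^2/2 * ((ζ : En n) (idx0 n hn))^2) ∂(sphereσ n) = a ^ 2 / (2 * n) := by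
  haveI := isProb_sphereσ n hn
  rw [integral_add ((integrable_cont hn (continuous_coord _)).const_mul a)
      ((integrable_cont hn (f := fun ζ : Sn n => ((ζ : En n) (idx0 n hn))^2) ((continuous_coord _).pow 2)).const_mul _),
    integral_const_mul, integral_const_mul, int_coord hn, int_coord_sq hn]
  have hnne : (n:ℝ) ≠ 0 := Nat.cast_ne_zero.mpr hn.ne'
  field_simp
  ring

lemma Ypt {a : ℝ} (ha : 0 < a) (ha2 : a ≤ 1/2) (ζ : Sn n) :
    |(1 + a * (ζ : En n) (idx0 n hn)) * Real.log (1 + a * (ζ : En n) (idx0 n hn))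
      - (a * (ζ : En n) (idx0 n hn) + a^2/2 * ((ζ : En n) (idx0 n hn))^2)| ≤ 4 * a ^ 3 := by
  have hcabs := abs_coord_le_one ζ (idx0 n hn)
  set c := (ζ : En n) (idx0 n hn) with hc
  have hs : |a * c| ≤ 1/2 := by
    rw [abs_mul, abs_of_pos ha]
    calc a * |c| ≤ a * 1 := mul_le_mul_of_nonneg_left hcabs ha.le
      _ ≤ 1/2 := by linarith
  have ht := taylor_log hs
  have heq : (1 + a * c) * Real.log (1 + a * c) - (a * c + a^2/2 * c^2)
      = (1 + a * c) * Real.log (1 + a * c) - a * c - (a * c) ^ 2 / 2 := by ring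
  rw [heq]
  calc |(1 + a * c) * Real.log (1 + a * c) - a * c - (a * c) ^ 2 / 2|
      ≤ 4 * |a * c| ^ 3 := ht
    _ ≤ 4 * a ^ 3 := by
        have h3 : |a * c| ≤ a := by
          rw [abs_mul, abs_of_pos ha]
          calc a * |c| ≤ a * 1 := mul_le_mul_of_nonneg_left hcabs ha.le
            _ = a := mul_one a
        have := pow_le_pow_left₀ (abs_nonneg (a*c)) h3 3
        linarith

lemma Ybound {a : ℝ} (ha : 0 < a) (ha2 : a ≤ 1/2) :
    |Yfun n hn a - a ^ 2 / (2 * n)| ≤ 4 * a ^ 3 := by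
  haveI := isProb_sphereσ n hn
  rw [Yfun_eq hn a]
  have ig : Integrable (fun ζ : Sn n => a * (ζ : En n) (idx0 n hn)
      + a^2/2 * ((ζ : En n) (idx0 n hn))^2) (sphereσ n) :=
    ((integrable_cont hn (continuous_coord _)).const_mul a).add
      ((integrable_cont hn ((continuous_coord _).pow 2)).const_mul _)
  have hint : (∫ ζ : Sn n, (1 + a * (ζ : En n) (idx0 n hn))
        * Real.log (1 + a * (ζ : En n) (idx0 n hn)) ∂(sphereσ n)) - a ^ 2 / (2 * n)
      = ∫ ζ : Sn n, ((1 + a * (ζ : En n) (idx0 n hn))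
          * Real.log (1 + a * (ζ : En n) (idx0 n hn))
        - (a * (ζ : En n) (idx0 n hn) + a^2/2 * ((ζ : En n) (idx0 n hn))^2)) ∂(sphereσ n) := by
    rw [integral_sub (integrable_cont hn (continuous_phi hn ha ha2)) ig, int_Yp hn a]
  rw [hint, ← Real.norm_eq_abs]
  have key := norm_integral_le_of_norm_le_const (μ := sphereσ n) (C := 4 * a ^ 3)
    (f := fun ζ : Sn n => (1 + a * (ζ : En n) (idx0 n hn))
          * Real.log (1 + a * (ζ : En n) (idx0 n hn))
        - (a * (ζ : En n) (idx0 n hn) + a^2/2 * ((ζ : En n) (idx0 n hn))^2))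
    (ae_of_all _ (fun ζ => by rw [Real.norm_eq_abs]; exact Ypt hn ha ha2 ζ))
  simpa using key

end est

/-- **Sharpness of the constant `n − 1`:** for `f_a(x) = a x + e₁`, as `a → 0⁺`,
`X(a) = a²(n−1)/(2n) + o(a²)`, `Y(a) = a²/(2n) + o(a²)`, and `X(a)/Y(a) → n − 1`. -/
theorem sharpness_general_dimension (n : ℕ) (hn : 2 ≤ n) :
    (fun a : ℝ => Xfun n (Nat.lt_of_lt_of_le Nat.zero_lt_two hn) a -
        a ^ 2 * (n - 1) / (2 * n)) =o[𝓝[>] (0:ℝ)] (fun a => a ^ 2) ∧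
    (fun a : ℝ => Yfun n (Nat.lt_of_lt_of_le Nat.zero_lt_two hn) a -
        a ^ 2 / (2 * n)) =o[𝓝[>] (0:ℝ)] (fun a => a ^ 2) ∧
    Tendsto (fun a : ℝ => Xfun n (Nat.lt_of_lt_of_le Nat.zero_lt_two hn) a /
        Yfun n (Nat.lt_of_lt_of_le Nat.zero_lt_two hn) a)
      (𝓝[>] (0:ℝ)) (𝓝 ((n : ℝ) - 1)) := by
  have hn0 : 0 < n := Nat.lt_of_lt_of_le Nat.zero_lt_two hn
  have hnR : (0:ℝ) < n := by exact_mod_cast hn0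
  have h2n : (2 * (n:ℝ)) ≠ 0 := by positivity
  have oX : (fun a : ℝ => Xfun n (Nat.lt_of_lt_of_le Nat.zero_lt_two hn) a -
      a ^ 2 * ((n:ℝ) - 1) / (2 * n)) =o[𝓝[>] (0:ℝ)] (fun a => a ^ 2) :=
    olem (by norm_num : (0:ℝ) < 2) (fun a ha ha2 => Xbound _ ha ha2)
  have oY : (fun a : ℝ => Yfun n (Nat.lt_of_lt_of_le Nat.zero_lt_two hn) a -
      a ^ 2 / (2 * n)) =o[𝓝[>] (0:ℝ)] (fun a => a ^ 2) :=
    olem (by norm_num : (0:ℝ) < 4) (fun a ha ha2 => Ybound _ ha ha2)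
  refine ⟨oX, oY, ?_⟩
  have hev : ∀ᶠ a : ℝ in 𝓝[>] (0:ℝ), a ≠ 0 ∧ a^2 ≠ 0 := by
    filter_upwards [self_mem_nhdsWithin] with a (ha : 0 < a)
    exact ⟨ha.ne', by positivity⟩
  have hXdiv : Tendsto (fun a : ℝ => Xfun n (Nat.lt_of_lt_of_le Nat.zero_lt_two hn) a / a ^ 2)
      (𝓝[>] (0:ℝ)) (𝓝 (((n:ℝ) - 1) / (2 * n))) := by
    have h := oX.tendsto_div_nhds_zero
    have h2 := h.add_const (((n:ℝ) - 1) / (2 * n))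
    rw [zero_add] at h2
    refine h2.congr' ?_
    filter_upwards [hev] with a ⟨ha, ha2⟩
    field_simp
    ring
  have hYdiv : Tendsto (fun a : ℝ => Yfun n (Nat.lt_of_lt_of_le Nat.zero_lt_two hn) a / a ^ 2)
      (𝓝[>] (0:ℝ)) (𝓝 ((1:ℝ) / (2 * n))) := by
    have h := oY.tendsto_div_nhds_zero
    have h2 := h.add_const ((1:ℝ) / (2 * n))
    rw [zero_add] at h2
    refine h2.congr' ?_
    filter_upwards [hev] with a ⟨ha, ha2⟩
    field_simp
    ring
  have hc2 : ((1:ℝ) / (2 * n)) ≠ 0 := by positivity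
  have hdiv := hXdiv.div hYdiv hc2
  have hval : (((n:ℝ) - 1) / (2 * n)) / ((1:ℝ) / (2 * n)) = (n:ℝ) - 1 := by
    field_simp
  rw [hval] at hdiv
  refine hdiv.congr' ?_
  filter_upwards [hev] with a ⟨ha, ha2⟩
  rcases eq_or_ne (Yfun n (Nat.lt_of_lt_of_le Nat.zero_lt_two hn) a) 0 with hY | hY
  · simp [hY]
  · simp only [Pi.div_apply]
    field_simp
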